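/- Let M be a real analytic manifold, Γ a group acting on M by real analytic diffeomorphisms via ρ: Γ → Diff^ω(M), with a fixed point x₀, and let r: Γ → GL(T_{x₀}M) be the infinitesimal representation at x₀. Suppose ρ is analytically linearizable at x₀ by a local analytic diffeomorphism φ with φ(0)=x₀ and φ∘r(γ) = ρ(γ)∘φ near 0 for every γ ∈ Γ. Then there exists an open set ℳ that is maximal among the connected open subsets of T_{x₀}M containing 0 that are r-invariant and on which φ extends to an analytic local diffeomorphism Φ: ℳ → M satisfying Φ∘r(γ) = ρ(γ)∘Φ on ℳ for every γ ∈ Γ. -/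

import Mathlib

open Set Filter Topology MeasureTheory Matrix Function
noncomputable section
namespace Zeghib

/-- `ℝⁿ` (with the sup norm; the choice of norm is irrelevant). -/
abbrev V (n : ℕ) : Type := Fin n → ℝ

section Charted

variable (E : Type*) [NormedAddCommGroup E] [NormedSpace ℝ E]
variable (E' : Type*) [NormedAddCommGroup E'] [NormedSpace ℝ E']
variable {M : Type*} [TopologicalSpace M] [ChartedSpace E M]
variable {M' : Type*} [TopologicalSpace M'] [ChartedSpace E' M']

/-- A map between charted spaces (over real normed vector spaces) is real analytic at a
point if it is continuous there and its representative in the preferred charts is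
real analytic. -/
def CAnalyticAt (f : M → M') (x : M) : Prop :=
  ContinuousAt f x ∧
    AnalyticAt ℝ ((chartAt E' (f x)) ∘ f ∘ (chartAt E x).symm) (chartAt E x x)

def CAnalyticOn (f : M → M') (s : Set M) : Prop := ∀ x ∈ s, CAnalyticAt E E' f x

def CAnalytic (f : M → M') : Prop := ∀ x, CAnalyticAt E E' f x

/-- A charted space is a real analytic manifold when all its transition maps are
real analytic. -/
def AnalyticCharts (M : Type*) [TopologicalSpace M] [ChartedSpace E M] : Prop :=
  ∀ x y : M, ∀ z ∈ ((chartAt E x).symm.trans (chartAt E y)).source,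
    AnalyticAt ℝ ((chartAt E y) ∘ (chartAt E x).symm) z

/-- `f` is, on `s`, a local analytic diffeomorphism (onto its image). -/
def LocalAnaDiffeoOn (f : M → M') (s : Set M) : Prop :=
  ∀ x ∈ s, ∃ U : Set M, IsOpen U ∧ x ∈ U ∧ U ⊆ s ∧ InjOn f U ∧ IsOpen (f '' U) ∧
    CAnalyticOn E E' f U ∧ ∃ g : M' → M, LeftInvOn g f U ∧ CAnalyticOn E' E g (f '' U)

/-- `f` restricted to `s` is a covering map onto its image. -/
def IsCoveringOntoImage (f : M → M') (s : Set M) : Prop :=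
  ∀ y ∈ f '' s, ∃ W : Set M', IsOpen W ∧ y ∈ W ∧
    ∃ (ι : Type) (U : ι → Set M), (∀ i, IsOpen (U i)) ∧
      Pairwise (Function.onFun Disjoint U) ∧ (s ∩ f ⁻¹' W = ⋃ i, U i) ∧
      ∀ i, BijOn f (U i) W

/-- An equivalence which is a real analytic diffeomorphism. -/
def IsAnaDiffeo (h : M ≃ M') : Prop := CAnalytic E E' h ∧ CAnalytic E' E h.symm

end Charted

/-- Star-shapedness with respect to the origin. -/
def StarShapedZero {n : ℕ} (s : Set (V n)) : Prop :=
  ∀ u ∈ s, ∀ t ∈ Icc (0:ℝ) 1, t • u ∈ s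

/-- `φ` extends, from a neighborhood of `0`, to an analytic local diffeomorphism
(onto its image) defined on `s`. -/
def ExtendsAsLocalAnaDiffeo {n : ℕ} {M : Type*} [TopologicalSpace M] [ChartedSpace (V n) M]
    (φ : V n → M) (s : Set (V n)) : Prop :=
  ∃ ψ : V n → M, (∀ᶠ u in 𝓝 (0 : V n), ψ u = φ u) ∧ LocalAnaDiffeoOn (V n) (V n) ψ s

/-- `(ℳ, Φ)` is an extension of the germ of the linearizing map `φ` to a connected
`r`-invariant open neighborhood `ℳ` of `0`, as an analytic local diffeomorphism
semi-conjugating the linear action `r` to the action `ρ`. -/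
def GoodExt {n : ℕ} {Γ : Type*} {M : Type*} [TopologicalSpace M] [ChartedSpace (V n) M]
    (r : Γ → V n → V n) (ρ : Γ → M → M) (φ : V n → M)
    (ℳ : Set (V n)) (Φ : V n → M) : Prop :=
  IsOpen ℳ ∧ IsConnected ℳ ∧ (0 : V n) ∈ ℳ ∧
  (∀ γ, ∀ u ∈ ℳ, r γ u ∈ ℳ) ∧
  (∀ᶠ u in 𝓝 (0 : V n), Φ u = φ u) ∧
  LocalAnaDiffeoOn (V n) (V n) Φ ℳ ∧
  (∀ γ, ∀ u ∈ ℳ, Φ (r γ u) = ρ γ (Φ u))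

/-- `φ` is an analytic diffeomorphism from an open neighborhood of `0 ∈ ℝⁿ` onto an open
neighborhood of its image, sending `0` to `x₀`. -/
def IsLocalLinearization {n : ℕ} {M : Type*} [TopologicalSpace M] [ChartedSpace (V n) M]
    (φ : V n → M) (x₀ : M) : Prop :=
  φ 0 = x₀ ∧
  ∃ U : Set (V n), IsOpen U ∧ (0 : V n) ∈ U ∧ InjOn φ U ∧ IsOpen (φ '' U) ∧
    CAnalyticOn (V n) (V n) φ U ∧
    ∃ ψ : M → V n, LeftInvOn ψ φ U ∧ CAnalyticOn (V n) (V n) ψ (φ '' U)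

section Helpers

variable {n : ℕ} {M : Type*} [TopologicalSpace M] [ChartedSpace (V n) M]
variable {M' : Type*} [TopologicalSpace M'] [ChartedSpace (V n) M']
variable {M'' : Type*} [TopologicalSpace M''] [ChartedSpace (V n) M'']

lemma canalyticAt_from (f : V n → M) (x : V n) :
    CAnalyticAt (V n) (V n) f x ↔
      ContinuousAt f x ∧ AnalyticAt ℝ ((chartAt (V n) (f x)) ∘ f) x := by
  simp [CAnalyticAt, chartAt_self_eq]

lemma canalyticAt_self (f : V n → V n) (x : V n) :
    CAnalyticAt (V n) (V n) f x ↔ AnalyticAt ℝ f x := by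
  rw [canalyticAt_from]
  constructor
  · rintro ⟨-, h⟩
    simpa [chartAt_self_eq] using h
  · intro h
    exact ⟨h.continuousAt, by simpa [chartAt_self_eq] using h⟩

/-- Composition of chart-analytic maps. -/
lemma CAnalyticAt.comp' {f : M → M'} {g : M' → M''} {x : M}
    (hg : CAnalyticAt (V n) (V n) g (f x)) (hf : CAnalyticAt (V n) (V n) f x) :
    CAnalyticAt (V n) (V n) (fun y => g (f y)) x := by
  obtain ⟨hfc, hfa⟩ := hf
  obtain ⟨hgc, hga⟩ := hg
  refine ⟨hgc.comp hfc, ?_⟩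
  set c₀ := chartAt (V n) x with hc₀
  set c₁ := chartAt (V n) (f x) with hc₁
  set c₂ := chartAt (V n) (g (f x)) with hc₂
  have hx : c₀.symm (c₀ x) = x := c₀.left_inv (mem_chart_source _ x)
  have h1 : (⇑c₁ ∘ f ∘ ⇑c₀.symm) (c₀ x) = c₁ (f x) := by simp [Function.comp, hx]
  have hga' : AnalyticAt ℝ (⇑c₂ ∘ g ∘ ⇑c₁.symm) ((⇑c₁ ∘ f ∘ ⇑c₀.symm) (c₀ x)) := by
    rw [h1]; exact hga
  have H := hga'.comp hfa
  have hcont : ContinuousAt (fun y => f (c₀.symm y)) (c₀ x) := by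
    have h0 : ContinuousAt (⇑c₀.symm) (c₀ x) :=
      c₀.continuousAt_symm (c₀.map_source (mem_chart_source _ x))
    have hfx : ContinuousAt f (c₀.symm (c₀ x)) := by rwa [hx]
    exact hfx.comp h0
  have hev : ∀ᶠ y in 𝓝 (c₀ x), f (c₀.symm y) ∈ c₁.source := by
    apply hcont.preimage_mem_nhds
    apply c₁.open_source.mem_nhds
    rw [hx]; exact mem_chart_source _ _
  apply H.congr
  filter_upwards [hev] with y hy
  simp [Function.comp, c₁.left_inv hy]

lemma CAnalyticAt.congr_ev {f g : V n → M} {x : V n}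
    (hf : CAnalyticAt (V n) (V n) f x) (h : f =ᶠ[𝓝 x] g) :
    CAnalyticAt (V n) (V n) g x := by
  have hx : f x = g x := h.eq_of_nhds
  rw [canalyticAt_from] at hf ⊢
  refine ⟨hf.1.congr h, ?_⟩
  rw [← hx]
  exact hf.2.congr (h.fun_comp (chartAt (V n) (f x)))

/-- Identity theorem for chart-analytic maps from `ℝⁿ` into a Hausdorff charted space. -/
lemma eqOn_of_canalytic [T2Space M] {f g : V n → M} {s : Set (V n)}
    (hsc : IsPreconnected s) (hf : CAnalyticOn (V n) (V n) f s)
    (hg : CAnalyticOn (V n) (V n) g s) {z : V n} (hz : z ∈ s)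
    (heq : f =ᶠ[𝓝 z] g) : EqOn f g s := by
  set S : Set (V n) := {u | f =ᶠ[𝓝 u] g} with hS
  have hSopen : IsOpen S := by
    rw [isOpen_iff_mem_nhds]
    intro u hu
    apply mem_of_superset (interior_mem_nhds.2 (hu : {y | f y = g y} ∈ 𝓝 u))
    intro w hw
    exact mem_of_superset (isOpen_interior.mem_nhds hw)
      (interior_subset : interior {y | f y = g y} ⊆ {y | f y = g y})
  have hsub : s ⊆ S ∪ (closure S)ᶜ := by
    intro u hus
    by_cases huS : u ∈ S
    · exact Or.inl huS
    right
    rw [mem_compl_iff]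
    obtain ⟨hfc, -⟩ := hf u hus
    obtain ⟨hgc, -⟩ := hg u hus
    by_cases hval : f u = g u
    · -- analytic germ argument
      set c := chartAt (V n) (f u) with hc
      have hF : AnalyticAt ℝ (⇑c ∘ f) u := ((canalyticAt_from f u).1 (hf u hus)).2
      have hG : AnalyticAt ℝ (⇑c ∘ g) u := by
        have := ((canalyticAt_from g u).1 (hg u hus)).2
        rwa [← hval] at this
      have hev : ∀ᶠ y in 𝓝 u, AnalyticAt ℝ (⇑c ∘ f) y ∧ AnalyticAt ℝ (⇑c ∘ g) y ∧
          f y ∈ c.source ∧ g y ∈ c.source := by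
        filter_upwards [hF.eventually_analyticAt, hG.eventually_analyticAt,
          hfc.preimage_mem_nhds (c.open_source.mem_nhds (mem_chart_source _ _)),
          hgc.preimage_mem_nhds (c.open_source.mem_nhds
            (by rw [← hval]; exact mem_chart_source _ _))] with y h1 h2 h3 h4
        exact ⟨h1, h2, h3, h4⟩
      obtain ⟨ε, hε, hball⟩ := Metric.eventually_nhds_iff_ball.1 hev
      intro hclos
      obtain ⟨w, hwball, hwS⟩ := mem_closure_iff.1 hclos _ Metric.isOpen_ball
        (Metric.mem_ball_self hε)
      have hFG : EqOn (⇑c ∘ f) (⇑c ∘ g) (Metric.ball u ε) := by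
        refine AnalyticOnNhd.eqOn_of_preconnected_of_eventuallyEq
          (fun y hy => (hball y hy).1) (fun y hy => (hball y hy).2.1)
          (convex_ball u ε).isPreconnected hwball ?_
        exact (hwS : f =ᶠ[𝓝 w] g).fun_comp ⇑c
      have hfg : EqOn f g (Metric.ball u ε) := by
        intro y hy
        exact c.injOn (hball y hy).2.2.1 (hball y hy).2.2.2 (hFG hy)
      exact huS (Filter.eventually_of_mem (Metric.ball_mem_nhds u hε) hfg)
    · -- separated values
      obtain ⟨O₁, O₂, hO₁, hO₂, hfu, hgu, hdisj⟩ := t2_separation hval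
      have hN : f ⁻¹' O₁ ∩ g ⁻¹' O₂ ∈ 𝓝 u :=
        inter_mem (hfc.preimage_mem_nhds (hO₁.mem_nhds hfu))
          (hgc.preimage_mem_nhds (hO₂.mem_nhds hgu))
      intro hclos
      obtain ⟨w, hwN, hwS⟩ := mem_closure_iff.1 hclos
        (interior (f ⁻¹' O₁ ∩ g ⁻¹' O₂)) isOpen_interior
        (mem_interior_iff_mem_nhds.2 hN)
      have hw' := interior_subset hwN
      have : f w = g w := (hwS : f =ᶠ[𝓝 w] g).eq_of_nhds
      exact hdisj.ne_of_mem hw'.1 (this ▸ hw'.2) rfl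
  have hdisj : Disjoint S (closure S)ᶜ := disjoint_compl_right.mono_left subset_closure
  have hfinal : s ⊆ S := hsc.subset_left_of_subset_union hSopen
    isClosed_closure.isOpen_compl hdisj hsub ⟨z, hz, heq⟩
  exact fun u hu => (hfinal hu : f =ᶠ[𝓝 u] g).eq_of_nhds

end Helpers

section Main

variable {n : ℕ} {Γ : Type*} [Group Γ]
variable {M : Type*} [TopologicalSpace M] [T2Space M] [ChartedSpace (V n) M]

lemma LocalAnaDiffeoOn.canalyticOn {f : V n → M} {s : Set (V n)}
    (h : LocalAnaDiffeoOn (V n) (V n) f s) : CAnalyticOn (V n) (V n) f s := by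
  intro x hx
  obtain ⟨U, -, hxU, -, -, -, han, -⟩ := h x hx
  exact han x hxU

end Main

/-- Let `Γ` act real-analytically on a real analytic manifold `M` with a
fixed point `x₀`, with infinitesimal representation `r` at `x₀`, and suppose the action is
analytically linearizable at `x₀` via `φ`. Then there is a maximal connected `r`-invariant
open set `ℳ ∋ 0` to which `φ` extends as an analytic local diffeomorphism `Φ`
semi-conjugating `r` to `ρ` on `ℳ`. -/
theorem statement_1 (n : ℕ) (Γ : Type*) [Group Γ]
    (M : Type*) [TopologicalSpace M] [T2Space M] [ChartedSpace (V n) M]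
    (hM : AnalyticCharts (V n) M)
    (ρ : Γ →* Equiv.Perm M) (hρ : ∀ γ : Γ, CAnalytic (V n) (V n) ⇑(ρ γ))
    (x₀ : M) (hfix : ∀ γ : Γ, ρ γ x₀ = x₀)
    (r : Γ → V n → V n)
    (hr : ∀ γ : Γ, r γ = fun u =>
      mfderiv (modelWithCornersSelf ℝ (V n)) (modelWithCornersSelf ℝ (V n)) (ρ γ) x₀ u)
    (φ : V n → M) (hφ : IsLocalLinearization φ x₀)
    (hconj : ∀ γ : Γ, ∀ᶠ u in 𝓝 (0 : V n), φ (r γ u) = ρ γ (φ u)) :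
    ∃ (ℳ : Set (V n)) (Φ : V n → M),
      GoodExt r (fun γ : Γ => ⇑(ρ γ)) φ ℳ Φ ∧
      ∀ (ℳ' : Set (V n)) (Φ' : V n → M),
        GoodExt r (fun γ : Γ => ⇑(ρ γ)) φ ℳ' Φ' → ℳ ⊆ ℳ' → ℳ' = ℳ := by
  classical
  obtain ⟨hφ0, U, hUo, hU0, hUinj, hUimgo, hUan, ψ, hψ, hψan⟩ := hφ
  have hcont : ∀ γ : Γ, Continuous ⇑(ρ γ) := fun γ =>
    continuous_iff_continuousAt.2 fun x => (hρ γ x).1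
  have hmdiff : ∀ γ : Γ, MDifferentiableAt (modelWithCornersSelf ℝ (V n))
      (modelWithCornersSelf ℝ (V n)) (⇑(ρ γ)) x₀ := by
    intro γ
    rw [mdifferentiableAt_iff]
    refine ⟨(hρ γ x₀).1, ?_⟩
    have h2 := (hρ γ x₀).2
    apply DifferentiableAt.differentiableWithinAt
    simpa [writtenInExtChartAt, Function.comp] using h2.differentiableAt
  have hr1 : ∀ u, r (1 : Γ) u = u := by
    intro u
    rw [hr]
    have h1 : ⇑(ρ (1 : Γ)) = id := by rw [_root_.map_one]; rfl
    rw [h1, mfderiv_id]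
    rfl
  have hrmul : ∀ a b : Γ, ∀ u, r (a * b) u = r a (r b u) := by
    intro a b u
    simp only [hr]
    have h1 : ⇑(ρ (a * b)) = ⇑(ρ a) ∘ ⇑(ρ b) := by rw [_root_.map_mul]; rfl
    have hda : MDifferentiableAt (modelWithCornersSelf ℝ (V n))
        (modelWithCornersSelf ℝ (V n)) (⇑(ρ a)) (ρ b x₀) := by rw [hfix b]; exact hmdiff a
    have hcomp := mfderiv_comp x₀ hda (hmdiff b)
    rw [← h1] at hcomp
    rw [hcomp, hfix b]
    rfl
  have hrcont : ∀ γ : Γ, Continuous (r γ) := by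
    intro γ; rw [hr]
    exact (mfderiv (modelWithCornersSelf ℝ (V n)) (modelWithCornersSelf ℝ (V n))
      (⇑(ρ γ)) x₀).continuous
  have hrlin : ∀ γ : Γ, IsLinearMap ℝ (r γ) := by
    intro γ
    rw [hr]
    exact ⟨fun x y => (mfderiv (modelWithCornersSelf ℝ (V n)) (modelWithCornersSelf ℝ (V n))
        (⇑(ρ γ)) x₀).map_add x y,
      fun c x => (mfderiv (modelWithCornersSelf ℝ (V n)) (modelWithCornersSelf ℝ (V n))
        (⇑(ρ γ)) x₀).map_smul c x⟩
  have hranal : ∀ γ : Γ, ∀ x : V n, AnalyticAt ℝ (r γ) x := by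
    intro γ x
    exact (⟨(hrlin γ).mk' (r γ), hrcont γ⟩ : V n →L[ℝ] V n).analyticAt x
  have hr0 : ∀ γ : Γ, r γ 0 = 0 := by
    intro γ; rw [hr]; exact (mfderiv (modelWithCornersSelf ℝ (V n)) (modelWithCornersSelf ℝ (V n))
      (⇑(ρ γ)) x₀).map_zero
  have hrconv : ∀ γ : Γ, ∀ s : Set (V n), Convex ℝ s → Convex ℝ (r γ ⁻¹' s) := by
    intro γ s hs
    exact hs.linear_preimage ((hrlin γ).mk' (r γ))
  have hrinv1 : ∀ a : Γ, ∀ u, r a⁻¹ (r a u) = u := by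
    intro a u; rw [← hrmul, inv_mul_cancel, hr1]
  have hrinv2 : ∀ a : Γ, ∀ u, r a (r a⁻¹ u) = u := by
    intro a u; rw [← hrmul, mul_inv_cancel, hr1]
  have hρρ1 : ∀ b : Γ, ∀ z : M, ρ b (ρ b⁻¹ z) = z := by
    intro b z; rw [_root_.map_inv]; exact Equiv.apply_symm_apply _ _
  have hρinj : ∀ b : Γ, Function.Injective ⇑(ρ b) := fun b => (ρ b).injective
  have hopenmap : ∀ b : Γ, IsOpenMap ⇑(ρ b) := by
    intro b O hO
    rw [Equiv.image_eq_preimage_symm]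
    have hsymm : ⇑(ρ b).symm = ⇑(ρ b⁻¹) := by rw [_root_.map_inv, Equiv.Perm.inv_def]
    rw [hsymm]; exact hO.preimage (hcont b⁻¹)
  have hφopen : ∀ s : Set (V n), s ⊆ U → IsOpen s → IsOpen (φ '' s) := by
    intro s hsU hso
    rw [isOpen_iff_mem_nhds]
    rintro y ⟨x, hxs, rfl⟩
    have hcψ : ContinuousAt ψ (φ x) := (hψan _ ⟨x, hsU hxs, rfl⟩).1
    have hψx : ψ (φ x) = x := hψ (hsU hxs)
    apply mem_of_superset (inter_mem (hUimgo.mem_nhds ⟨x, hsU hxs, rfl⟩)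
      (hcψ.preimage_mem_nhds (by rw [hψx]; exact hso.mem_nhds hxs)))
    rintro y' ⟨⟨x', hx'U, rfl⟩, hy'⟩
    refine ⟨x', ?_, rfl⟩
    have h5 := hψ hx'U
    have h6 : ψ (φ x') ∈ s := hy'
    rwa [h5] at h6
  obtain ⟨ε, hε, hBU⟩ := Metric.isOpen_iff.1 hUo 0 hU0
  set B := Metric.ball (0 : V n) ε with hBdef
  have hB0 : (0 : V n) ∈ B := Metric.mem_ball_self hε
  have hBconv : Convex ℝ B := convex_ball 0 ε
  have hBopen : IsOpen B := Metric.isOpen_ball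
  have key : ∀ δ : Γ, ∀ w, w ∈ B → r δ w ∈ B → φ (r δ w) = ρ δ (φ w) := by
    intro δ w hw hrw
    have hs : IsPreconnected (B ∩ r δ ⁻¹' B) :=
      (hBconv.inter (hrconv δ B hBconv)).isPreconnected
    have h := eqOn_of_canalytic (f := fun w => φ (r δ w)) (g := fun w => ρ δ (φ w)) hs
      (fun x hx => CAnalyticAt.comp' (hUan _ (hBU hx.2)) ((canalyticAt_self _ _).2 (hranal δ x)))
      (fun x hx => CAnalyticAt.comp' (hρ δ (φ x)) (hUan x (hBU hx.1)))
      (z := 0) ⟨hB0, by rw [mem_preimage, hr0]; exact hB0⟩ (hconj δ)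
    exact h ⟨hw, hrw⟩
  set ℳ₀ : Set (V n) := ⋃ γ : Γ, r γ ⁻¹' B with hℳ₀def
  have hwd : ∀ u, ∀ a b : Γ, r a u ∈ B → r b u ∈ B →
      ρ a⁻¹ (φ (r a u)) = ρ b⁻¹ (φ (r b u)) := by
    intro u a b ha hb
    have h1 : r (b * a⁻¹) (r a u) = r b u := by rw [← hrmul, inv_mul_cancel_right]
    have h2 := key (b * a⁻¹) (r a u) ha (by rw [h1]; exact hb)
    rw [h1] at h2
    rw [h2]
    have h3 : ∀ c d : Γ, ∀ z : M, ρ c (ρ d z) = ρ (c * d) z := by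
      intro c d z; rw [_root_.map_mul]; rfl
    rw [h3, inv_mul_cancel_left]
  set Φ₀ : V n → M := fun u =>
    if h : ∃ a : Γ, r a u ∈ B then
      ρ (Classical.choose h)⁻¹ (φ (r (Classical.choose h) u)) else x₀ with hΦ₀def
  have hΦspec : ∀ u, ∀ a : Γ, r a u ∈ B → Φ₀ u = ρ a⁻¹ (φ (r a u)) := by
    intro u a ha
    have hex : ∃ b : Γ, r b u ∈ B := ⟨a, ha⟩
    have : Φ₀ u = ρ (Classical.choose hex)⁻¹ (φ (r (Classical.choose hex) u)) := by
      rw [hΦ₀def]; exact dif_pos hex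
    rw [this]
    exact hwd u _ a (Classical.choose_spec hex) ha
  have hΦB : ∀ u ∈ B, Φ₀ u = φ u := by
    intro u hu
    have h := hΦspec u 1 (by rw [hr1]; exact hu)
    rw [h, hr1, inv_one, _root_.map_one]
    rfl
  have hmem₀ : ∀ u, ∀ a : Γ, r a u ∈ B → u ∈ ℳ₀ := by
    intro u a ha; exact mem_iUnion.2 ⟨a, ha⟩
  have good₀ : GoodExt r (fun γ : Γ => ⇑(ρ γ)) φ ℳ₀ Φ₀ := by
    refine ⟨isOpen_iUnion fun γ => hBopen.preimage (hrcont γ),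
      ⟨⟨0, hmem₀ 0 1 (by rw [hr1]; exact hB0)⟩,
        isPreconnected_iUnion ⟨0, mem_iInter.2 fun γ => by
          rw [mem_preimage, hr0]; exact hB0⟩
          fun γ => (hrconv γ B hBconv).isPreconnected⟩,
      hmem₀ 0 1 (by rw [hr1]; exact hB0), ?_, ?_, ?_, ?_⟩
    · -- invariance
      intro γ u hu
      obtain ⟨a, ha⟩ := mem_iUnion.1 hu
      refine hmem₀ _ (a * γ⁻¹) ?_
      rw [← hrmul, inv_mul_cancel_right]
      exact ha
    · -- eventually equal to φ
      filter_upwards [hBopen.mem_nhds hB0] with u hu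
      exact hΦB u hu
    · -- local analytic diffeo
      intro u hu
      obtain ⟨a, ha⟩ := mem_iUnion.1 hu
      have hU'o : IsOpen (r a ⁻¹' B) := hBopen.preimage (hrcont a)
      refine ⟨r a ⁻¹' B, hU'o, ha, fun x hx => hmem₀ x a hx, ?_, ?_, ?_,
        fun y => r a⁻¹ (ψ (ρ a y)), ?_, ?_⟩
      · -- InjOn
        intro x hx y hy hxy
        rw [hΦspec x a hx, hΦspec y a hy] at hxy
        have h1 := hUinj (hBU hx) (hBU hy) (hρinj a⁻¹ hxy)
        have := congrArg (r a⁻¹) h1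
        rwa [hrinv1, hrinv1] at this
      · -- open image
        have h3 : r a '' (r a ⁻¹' B) = B :=
          image_preimage_eq B fun v => ⟨r a⁻¹ v, hrinv2 a v⟩
        have him : Φ₀ '' (r a ⁻¹' B) = ⇑(ρ a⁻¹) '' (φ '' B) :=
          calc Φ₀ '' (r a ⁻¹' B)
              = (fun x => ρ a⁻¹ (φ (r a x))) '' (r a ⁻¹' B) :=
                image_congr (fun x hx => hΦspec x a hx)
            _ = ⇑(ρ a⁻¹) '' ((fun x => φ (r a x)) '' (r a ⁻¹' B)) :=
                (image_image _ _ _).symm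
            _ = ⇑(ρ a⁻¹) '' (φ '' (r a '' (r a ⁻¹' B))) := by
                rw [image_image φ (r a)]
            _ = ⇑(ρ a⁻¹) '' (φ '' B) := by rw [h3]
        rw [him]
        exact hopenmap a⁻¹ _ (hφopen B hBU hBopen)
      · -- analytic
        intro x hx
        have hca : CAnalyticAt (V n) (V n) (fun y => ρ a⁻¹ (φ (r a y))) x :=
          CAnalyticAt.comp' (hρ a⁻¹ _)
            (CAnalyticAt.comp' (hUan _ (hBU hx)) ((canalyticAt_self _ _).2 (hranal a x)))
        apply hca.congr_ev
        filter_upwards [hU'o.mem_nhds hx] with y hy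
        exact (hΦspec y a hy).symm
      · -- left inverse
        intro x hx
        show r a⁻¹ (ψ (ρ a (Φ₀ x))) = x
        rw [hΦspec x a hx, hρρ1, hψ (hBU hx), hrinv1]
      · -- analytic inverse
        rintro y ⟨x, hx, rfl⟩
        rw [hΦspec x a hx]
        have hmemφ : ρ a (ρ a⁻¹ (φ (r a x))) ∈ φ '' U := by
          rw [hρρ1]; exact ⟨r a x, hBU hx, rfl⟩
        exact CAnalyticAt.comp' ((canalyticAt_self _ _).2 (hranal a⁻¹ _))
          (CAnalyticAt.comp' (hψan _ hmemφ) (hρ a _))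
    · -- conjugation
      intro γ u hu
      show Φ₀ (r γ u) = ρ γ (Φ₀ u)
      obtain ⟨a, ha⟩ := mem_iUnion.1 hu
      have h1 : r (a * γ⁻¹) (r γ u) ∈ B := by
        rw [← hrmul, inv_mul_cancel_right]; exact ha
      rw [hΦspec _ _ h1, hΦspec u a ha, ← hrmul, inv_mul_cancel_right]
      have h2 : ∀ z : M, ρ γ (ρ a⁻¹ z) = ρ (γ * a⁻¹) z := by
        intro z; rw [_root_.map_mul]; rfl
      rw [h2, show (a * γ⁻¹)⁻¹ = γ * a⁻¹ by group]
  -- Zorn's lemma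
  set S : Set (Set (V n)) :=
    {s | ∃ Φ : V n → M, GoodExt r (fun γ : Γ => ⇑(ρ γ)) φ s Φ} with hSdef
  set F : Set (V n) → V n → M := fun s =>
    if h : ∃ Φ : V n → M, GoodExt r (fun γ : Γ => ⇑(ρ γ)) φ s Φ then Classical.choose h
    else fun _ => x₀ with hFdef
  have hF : ∀ s ∈ S, GoodExt r (fun γ : Γ => ⇑(ρ γ)) φ s (F s) := by
    intro s hs
    have : F s = Classical.choose hs := by rw [hFdef]; exact dif_pos hs
    rw [this]
    exact Classical.choose_spec hs
  have hzorn := zorn_subset_nonempty S ?_ ℳ₀ ⟨Φ₀, good₀⟩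
  · obtain ⟨m, -, hmax⟩ := hzorn
    refine ⟨m, F m, hF m hmax.1, ?_⟩
    intro ℳ' Φ' hgood' hsub
    exact subset_antisymm (hmax.2 ⟨Φ', hgood'⟩ hsub) hsub
  · -- chains have upper bounds
    intro c hcS hchain hcne
    refine ⟨⋃₀ c, ?_, fun s hs => subset_sUnion_of_mem hs⟩
    obtain ⟨s₀, hs₀⟩ := hcne
    have hagree : ∀ s ∈ c, ∀ t ∈ c, s ⊆ t → EqOn (F s) (F t) s := by
      intro s hs t ht hst
      obtain ⟨hso, hsc, hs0, -, hsev, hsloc, -⟩ := hF s (hcS hs)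
      obtain ⟨-, -, -, -, htev, htloc, -⟩ := hF t (hcS ht)
      exact eqOn_of_canalytic hsc.isPreconnected hsloc.canalyticOn
        (fun x hx => htloc.canalyticOn x (hst hx)) hs0 (Filter.EventuallyEq.trans hsev (Filter.EventuallyEq.symm htev))
    set Φ' : V n → M := fun u =>
      if h : ∃ t, t ∈ c ∧ u ∈ t then F (Classical.choose h) u else x₀ with hΦ'def
    have hglue : ∀ s ∈ c, ∀ u ∈ s, Φ' u = F s u := by
      intro s hs u hu
      have hex : ∃ t, t ∈ c ∧ u ∈ t := ⟨s, hs, hu⟩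
      have h1 : Φ' u = F (Classical.choose hex) u := by
        simp only [hΦ'def]
        rw [dif_pos hex]
      obtain ⟨htc, hut⟩ := Classical.choose_spec hex
      rw [h1]
      rcases hchain.total htc hs with h | h
      · exact hagree _ htc s hs h hut
      · exact (hagree s hs _ htc h hu).symm
    have h0mem : ∀ s ∈ c, (0 : V n) ∈ s := fun s hs => (hF s (hcS hs)).2.2.1
    refine ⟨Φ', isOpen_sUnion fun s hs => (hF s (hcS hs)).1,
      ⟨⟨0, s₀, hs₀, h0mem s₀ hs₀⟩, isPreconnected_sUnion 0 c h0mem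
        fun s hs => (hF s (hcS hs)).2.1.isPreconnected⟩,
      ⟨s₀, hs₀, h0mem s₀ hs₀⟩, ?_, ?_, ?_, ?_⟩
    · -- invariance
      rintro γ u ⟨s, hs, hus⟩
      exact ⟨s, hs, (hF s (hcS hs)).2.2.2.1 γ u hus⟩
    · -- eventually equal to φ
      have h1 := (hF s₀ (hcS hs₀)).2.2.2.2.1
      have h2 : ∀ᶠ u in 𝓝 (0 : V n), u ∈ s₀ :=
        (hF s₀ (hcS hs₀)).1.mem_nhds (h0mem s₀ hs₀)
      filter_upwards [h1, h2] with u hu1 hu2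
      rw [hglue s₀ hs₀ u hu2]; exact hu1
    · -- local analytic diffeo
      rintro u ⟨s, hs, hus⟩
      obtain ⟨U', hU'o, huU', hU'sub, hinj, himo, han, g, hg, hgan⟩ :=
        (hF s (hcS hs)).2.2.2.2.2.1 u hus
      have heqU' : EqOn Φ' (F s) U' := fun x hx => hglue s hs x (hU'sub hx)
      have himeq : Φ' '' U' = F s '' U' := image_congr heqU'
      refine ⟨U', hU'o, huU', fun x hx => ⟨s, hs, hU'sub hx⟩, hinj.congr heqU'.symm,
        himeq ▸ himo, ?_, g, fun x hx => by rw [heqU' hx]; exact hg hx, himeq ▸ hgan⟩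
      intro x hx
      apply (han x hx).congr_ev
      filter_upwards [hU'o.mem_nhds hx] with y hy
      exact (heqU' hy).symm
    · -- conjugation
      rintro γ u ⟨s, hs, hus⟩
      have h1 := (hF s (hcS hs)).2.2.2.2.2.2 γ u hus
      rw [hglue s hs _ ((hF s (hcS hs)).2.2.2.1 γ u hus), hglue s hs u hus]
      exact h1
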